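/- Let $X$ be a complex inner product space with inner product $a(\cdot,\cdot)$, $P : X \to X$ an orthogonal projection with respect to $a$, and let $s$ be a Hermitian positive semidefinite sesquilinear form on $X$ satisfying $c_1\, a((I-P)v,(I-P)v) \leq s((I-P)v,(I-P)v) \leq c_2\, a((I-P)v,(I-P)v)$ for all $v \in X$, with constants $0 < c_1 \leq c_2$. Define $a_h(u,v) := a(Pu,Pv) + s((I-P)u,(I-P)v)$. Then $\min(1,c_1)\, a(v,v) \leq a_h(v,v) \leq \max(1,c_2)\, a(v,v)$ for all $v \in X$. -/

import Mathlib

/-- Stability of the stabilized form: if the stabilization `s` is spectrally equivalent to the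
complementary part of the orthogonal projection `P`, then
`min(1,c₁) a(v,v) ≤ a_h(v,v) ≤ max(1,c₂) a(v,v)`. -/
theorem stmt6 {X : Type*} [NormedAddCommGroup X] [InnerProductSpace ℂ X]
    (P : X →L[ℂ] X) (hidem : ∀ v, P (P v) = P v)
    (hsa : ∀ u v : X, (inner ℂ (P u) v : ℂ) = (inner ℂ u (P v) : ℂ))
    (s : X → X → ℂ)
    (hherm : ∀ u v, s u v = (starRingEnd ℂ) (s v u))
    (hpsd : ∀ v, 0 ≤ (s v v).re)
    (c₁ c₂ : ℝ) (hc₁ : 0 < c₁) (hc₁₂ : c₁ ≤ c₂)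
    (hlow : ∀ v : X, c₁ * ((inner ℂ (v - P v) (v - P v) : ℂ)).re ≤ (s (v - P v) (v - P v)).re)
    (hup : ∀ v : X, (s (v - P v) (v - P v)).re ≤ c₂ * ((inner ℂ (v - P v) (v - P v) : ℂ)).re)
    (ah : X → X → ℂ)
    (hah : ∀ u v, ah u v = (inner ℂ (P u) (P v) : ℂ) + s (u - P u) (v - P v)) :
    ∀ v : X, min 1 c₁ * ((inner ℂ v v : ℂ)).re ≤ (ah v v).re ∧
      (ah v v).re ≤ max 1 c₂ * ((inner ℂ v v : ℂ)).re := by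
  intro v
  have h1 : (inner ℂ (P v) (v - P v) : ℂ) = 0 := by
    rw [hsa]; simp [map_sub, hidem]
  have h2 : (inner ℂ (v - P v) (P v) : ℂ) = 0 := by
    rw [← inner_conj_symm, h1, map_zero]
  have key : (inner ℂ v v : ℂ) = inner ℂ (P v) (P v) + inner ℂ (v - P v) (v - P v) := by
    have hv : v = P v + (v - P v) := by abel
    calc (inner ℂ v v : ℂ) = inner ℂ (P v + (v - P v)) (P v + (v - P v)) := by rw [← hv]
    _ = inner ℂ (P v) (P v) + inner ℂ (v - P v) (v - P v) := by
        rw [inner_add_left, inner_add_right, inner_add_right, h1, h2]; ring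
  set p := ((inner ℂ (P v) (P v) : ℂ)).re with hp'
  set q := ((inner ℂ (v - P v) (v - P v) : ℂ)).re with hq'
  have hre : ((inner ℂ v v : ℂ)).re = p + q := by rw [key, Complex.add_re]
  have hp : 0 ≤ p := by simpa [hp'] using inner_self_nonneg (𝕜 := ℂ) (x := P v)
  have hq : 0 ≤ q := by simpa [hq'] using inner_self_nonneg (𝕜 := ℂ) (x := v - P v)
  have hahre : (ah v v).re = p + (s (v - P v) (v - P v)).re := by
    rw [hah, Complex.add_re]
  have hl := hlow v
  have hu := hup v
  constructor
  · rw [hre, hahre]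
    nlinarith [min_le_left (1:ℝ) c₁, min_le_right (1:ℝ) c₁]
  · rw [hre, hahre]
    nlinarith [le_max_left (1:ℝ) c₂, le_max_right (1:ℝ) c₂, hc₁.le.trans hc₁₂]
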